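/- Let G be a finite simple graph whose complement contains an induced cycle, and let m be the maximum n ≥ 3 such that cycleGraph n embeds into the complement of G. Let S be a set of natural numbers each strictly greater than m, and let D_S be the disjoint union of the cycle graphs C_s for s ∈ S. Then: (1) there is no graph embedding of G into the complement of D_S (the connected union of the complements of the cycles C_s, s ∈ S), so this graph is G-free; and (2) for every k ≥ 3, the complement of cycleGraph k embeds into the complement of D_S if and only if k ∈ S. -/

import Mathlib

open SimpleGraph

/-- The disjoint union of the cycle graphs `C_s` for `s ∈ S`: the simple graph on the sigma
type `Σ s : S, Fin s` in which two vertices are adjacent iff they lie in the same summand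
`s` and are adjacent in `cycleGraph s`. -/
def cyclesDisjointUnion (S : Set ℕ) : SimpleGraph (Σ s : S, Fin (s : ℕ)) where
  Adj x y := ∃ h : (x.1 : ℕ) = (y.1 : ℕ), (cycleGraph (y.1 : ℕ)).Adj (Fin.cast h x.2) y.2
  symm := by
    constructor
    rintro ⟨⟨s, hs⟩, i⟩ ⟨⟨t, ht⟩, j⟩ ⟨h, hadj⟩
    dsimp only at h
    subst h
    exact ⟨rfl, by simpa [Fin.ext_iff] using hadj.symm⟩
  loopless := by
    constructor
    rintro ⟨⟨s, hs⟩, i⟩ ⟨h, hadj⟩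
    have : Fin.cast h i = i := by ext; rfl
    rw [this] at hadj
    exact (cycleGraph s).loopless.irrefl i hadj

def embCompl {α β : Type*} {G : SimpleGraph α} {H : SimpleGraph β} (f : G ↪g H) :
    Gᶜ ↪g Hᶜ where
  toEmbedding := f.toEmbedding
  map_rel_iff' := by
    intro a b
    simp [compl_adj, f.map_rel_iff, f.injective.ne_iff]

lemma mem_of_closed {V : Type*} {G : SimpleGraph V} (hp : G.Preconnected) (T : Set V)
    (hT : ∀ v ∈ T, ∀ w, G.Adj v w → w ∈ T) {v : V} (hv : v ∈ T) (w : V) : w ∈ T := by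
  obtain ⟨p⟩ := hp v w
  induction p with
  | nil => exact hv
  | cons h p ih => exact ih (hT _ hv _ h)

lemma cycle_adj_add_one (n : ℕ) (u : Fin (n + 3)) : (cycleGraph (n + 3)).Adj u (u + 1) := by
  rw [cycleGraph_adj']
  right
  simp only [add_sub_cancel_left, Fin.val_one]

lemma cycle_adj_sub_one (n : ℕ) (u : Fin (n + 3)) : (cycleGraph (n + 3)).Adj u (u - 1) := by
  rw [cycleGraph_adj']
  left
  simp only [sub_sub_cancel, Fin.val_one]

lemma sub_ne_add (n : ℕ) (u : Fin (n + 3)) : u - 1 ≠ u + 1 := by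
  intro h
  have h2 : (2 : Fin (n + 3)) = 0 := by open Fin.CommRing in linear_combination -h
  have h3 := congrArg Fin.val h2
  simp [Fin.val_two] at h3
  rw [Nat.mod_eq_of_lt (by omega)] at h3
  omega

lemma no_embed_cycle_lt {a b : ℕ} (ha : 3 ≤ a) (hab : a < b) :
    ¬ Nonempty (cycleGraph a ↪g cycleGraph b) := by
  rintro ⟨f⟩
  obtain ⟨a', rfl⟩ : ∃ a', a = a' + 3 := ⟨a - 3, by omega⟩
  obtain ⟨b', rfl⟩ : ∃ b', b = b' + 2 := ⟨b - 2, by omega⟩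
  have hclosed : ∀ v ∈ Set.range f, ∀ w, (cycleGraph (b' + 2)).Adj v w → w ∈ Set.range f := by
    rintro v ⟨u, rfl⟩ w hw
    have h1 : (cycleGraph (b' + 2)).Adj (f u) (f (u - 1)) :=
      f.map_rel_iff.mpr (cycle_adj_sub_one a' u)
    have h2 : (cycleGraph (b' + 2)).Adj (f u) (f (u + 1)) :=
      f.map_rel_iff.mpr (cycle_adj_add_one a' u)
    have hne : f (u - 1) ≠ f (u + 1) := f.injective.ne (sub_ne_add a' u)
    rw [← mem_neighborSet, cycleGraph_neighborSet] at hw h1 h2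
    simp only [Set.mem_insert_iff, Set.mem_singleton_iff] at hw h1 h2
    rcases hw with hw | hw <;> rcases h1 with h1 | h1 <;> rcases h2 with h2 | h2 <;>
      first
      | exact ⟨u - 1, h1.trans hw.symm⟩
      | exact ⟨u + 1, h2.trans hw.symm⟩
      | exact absurd (h1.trans h2.symm) hne
  have hall : ∀ w, w ∈ Set.range f :=
    mem_of_closed cycleGraph_preconnected _ hclosed ⟨(0 : Fin (a' + 3)), rfl⟩
  have hsurj : Function.Surjective f := fun w => hall w
  have := Fintype.card_le_of_surjective f hsurj
  simp at this
  omega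

lemma exists_summand {S : Set ℕ} {n : ℕ} (hn : 1 ≤ n)
    (f : cycleGraph n ↪g cyclesDisjointUnion S) :
    ∃ s ∈ S, Nonempty (cycleGraph n ↪g cycleGraph s) := by
  have v0 : Fin n := ⟨0, by omega⟩
  have hadjsum : ∀ u v : Fin n, (cycleGraph n).Adj u v → (f u).1 = (f v).1 := by
    intro u v h
    obtain ⟨h', -⟩ := f.map_rel_iff.mpr h
    exact Subtype.ext h'
  have hconst : ∀ v, (f v).1 = (f v0).1 := by
    intro v
    have := mem_of_closed cycleGraph_preconnected {v | (f v).1 = (f v0).1}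
      (fun u hu w hw => by rw [Set.mem_setOf_eq, ← hadjsum u w hw]; exact hu) rfl v
    exact this
  refine ⟨(f v0).1, (f v0).1.2, ⟨⟨⟨fun v => Fin.cast (congrArg _ (hconst v)) (f v).2, ?_⟩, ?_⟩⟩⟩
  · intro u v h
    apply f.injective
    have hval : ((f u).2 : ℕ) = ((f v).2 : ℕ) := by
      simpa using congrArg Fin.val h
    exact Sigma.ext ((hconst u).trans (hconst v).symm)
      ((Fin.heq_ext_iff (by rw [hconst u, hconst v])).mpr hval)
  · intro u v
    rw [← f.map_rel_iff]
    show _ ↔ ∃ h, _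
    constructor
    · intro h
      refine ⟨by rw [hconst u, hconst v], ?_⟩
      rw [cycleGraph_adj'] at h ⊢
      simp [Fin.sub_def, congrArg Subtype.val (hconst u), congrArg Subtype.val (hconst v)] at h ⊢
      exact h
    · rintro ⟨h', h⟩
      rw [cycleGraph_adj'] at h ⊢
      simp [Fin.sub_def, congrArg Subtype.val (hconst u), congrArg Subtype.val (hconst v)] at h ⊢
      exact h

/-- Let `G` be a finite simple graph whose complement contains an induced
cycle, and let `m` be the maximal `n ≥ 3` such that `cycleGraph n` embeds into `Gᶜ`. If
every element of `S` is strictly greater than `m`, then (1) `G` does not embed into the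
complement of the disjoint union `D_S` (the connected union of the complements of the
cycles `C_s`, `s ∈ S`), so this graph is `G`-free; and (2) for every `k ≥ 3`, the
complement of `cycleGraph k` embeds into `(D_S)ᶜ` iff `k ∈ S`. -/
theorem compl_cyclesDisjointUnion_free_and_types
    {α : Type*} [Fintype α] (G : SimpleGraph α) (m : ℕ) (hm : 3 ≤ m)
    (hmem : Nonempty (cycleGraph m ↪g Gᶜ))
    (hmax : ∀ n, 3 ≤ n → Nonempty (cycleGraph n ↪g Gᶜ) → n ≤ m)
    (S : Set ℕ) (hS : ∀ s ∈ S, m < s) :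
    (¬ Nonempty (G ↪g (cyclesDisjointUnion S)ᶜ)) ∧
      (∀ k, 3 ≤ k →
        (Nonempty ((cycleGraph k)ᶜ ↪g (cyclesDisjointUnion S)ᶜ) ↔ k ∈ S)) := by
  constructor
  · rintro ⟨f⟩
    obtain ⟨e⟩ := hmem
    have f' : Gᶜ ↪g cyclesDisjointUnion S := by
      have h := embCompl f
      rwa [compl_compl] at h
    obtain ⟨s, hsS, ⟨g⟩⟩ := exists_summand (by omega) (f'.comp e)
    exact no_embed_cycle_lt hm (hS s hsS) ⟨g⟩
  · intro k hk
    constructor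
    · rintro ⟨f⟩
      have f' : cycleGraph k ↪g cyclesDisjointUnion S := by
        have h := embCompl f
        rwa [compl_compl, compl_compl] at h
      obtain ⟨s, hsS, ⟨g⟩⟩ := exists_summand (by omega) f'
      have hle : k ≤ s := by simpa using Fintype.card_le_of_embedding g.toEmbedding
      rcases eq_or_lt_of_le hle with rfl | hlt
      · exact hsS
      · exact absurd ⟨g⟩ (no_embed_cycle_lt hk hlt)
    · intro hkS
      refine ⟨embCompl ⟨⟨fun i => ⟨⟨k, hkS⟩, i⟩, ?_⟩, ?_⟩⟩
      · intro i j h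
        simpa using h
      · intro i j
        show (∃ h : (k : ℕ) = (k : ℕ), _) ↔ _
        constructor
        · rintro ⟨h, hadj⟩
          have e : Fin.cast h i = i := by ext; rfl
          exact hadj
        · intro h
          have e : Fin.cast (rfl : (k : ℕ) = (k : ℕ)) i = i := by ext; rfl
          exact ⟨rfl, e ▸ h⟩
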